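/- Let f : ℝⁿ → ℝ be quasi-convex and upper semicontinuous with S^f_{<,0} ≠ ∅, and suppose f satisfies property (sHöl) on S^f_{≤,0} with order δ > 0 and modulus L > 0. Then for every x ∈ ℝⁿ with x ∉ S^f_{≤,0}, every q ∈ S^f_{≤,0}, and every nonzero c ∈ ∂*f(x), it holds that f₊(x) ≤ L · ⟨c/‖c‖, x − q⟩^δ. -/

import Mathlib

/-- The star subdifferential of `f` at `x`. -/
def starSubdiff {n : ℕ} (f : EuclideanSpace ℝ (Fin n) → ℝ) (x : EuclideanSpace ℝ (Fin n)) :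
    Set (EuclideanSpace ℝ (Fin n)) :=
  {g | ∀ y : EuclideanSpace ℝ (Fin n), f y < f x → (inner ℝ g (y - x) : ℝ) ≤ 0}

/-- Konnov's lemma: if `f` is quasi-convex, upper semicontinuous, has a nonempty strict zero
sublevel set and satisfies the Hölder-type property (sHöl) on `S^f_{≤,0}` with order `δ > 0` and
modulus `L > 0`, then for every `x ∉ S^f_{≤,0}`, every `q ∈ S^f_{≤,0}` and every nonzero
`c ∈ ∂*f(x)` one has `f₊(x) ≤ L⟪c/‖c‖, x - q⟫^δ`. -/
theorem starSubdiff_hoelder_bound {n : ℕ}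
    (f : EuclideanSpace ℝ (Fin n) → ℝ) (δ L : ℝ) (hδ : 0 < δ) (hL : 0 < L)
    (hqc : ∀ lam : ℝ, Convex ℝ {y : EuclideanSpace ℝ (Fin n) | f y ≤ lam})
    (husc : ∀ lam : ℝ, IsOpen {y : EuclideanSpace ℝ (Fin n) | f y < lam})
    (hne : {y : EuclideanSpace ℝ (Fin n) | f y < 0}.Nonempty)
    (hhol : ∀ q x' : EuclideanSpace ℝ (Fin n), f q ≤ 0 → |f x' - f q| ≤ L * ‖x' - q‖ ^ δ)
    (x q c : EuclideanSpace ℝ (Fin n))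
    (hx : ¬ f x ≤ 0) (hq : f q ≤ 0) (hc : c ∈ starSubdiff f x) (hc0 : c ≠ 0) :
    max (f x) 0 ≤ L * (inner ℝ (‖c‖⁻¹ • c) (x - q) : ℝ) ^ δ := by
  set u : EuclideanSpace ℝ (Fin n) := ‖c‖⁻¹ • c with hu
  push_neg at hx
  have hcn : (0:ℝ) < ‖c‖ := norm_pos_iff.mpr hc0
  have hun : ‖u‖ = 1 := by
    rw [hu, norm_smul, norm_inv, norm_norm, inv_mul_cancel₀ (ne_of_gt hcn)]
  set t : ℝ := (inner ℝ u (x - q) : ℝ) with ht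
  have hcu : (inner ℝ c u : ℝ) = ‖c‖ := by
    rw [hu, real_inner_smul_right, real_inner_self_eq_norm_sq]
    field_simp
  set r : ℝ := (f x / L) ^ δ⁻¹ with hr
  have hfxL : 0 < f x / L := div_pos hx hL
  have hr0 : 0 < r := Real.rpow_pos_of_pos hfxL _
  have hrδ : r ^ δ = f x / L := Real.rpow_inv_rpow (le_of_lt hfxL) (ne_of_gt hδ)
  have key : ∀ s : ℝ, 0 ≤ s → s < r → s ≤ t := by
    intro s hs0 hsr
    have hy : f (q + s • u) < f x := by
      have h1 := hhol q (q + s • u) hq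
      have hnorm : ‖q + s • u - q‖ = s := by
        simp [norm_smul, hun, abs_of_nonneg hs0]
      rw [hnorm] at h1
      have h2 : f (q + s • u) ≤ f q + L * s ^ δ := by
        have := abs_le.mp h1
        linarith [this.2]
      have h3 : L * s ^ δ < L * r ^ δ :=
        mul_lt_mul_of_pos_left (Real.rpow_lt_rpow hs0 hsr hδ) hL
      rw [hrδ] at h3
      have h4 : L * (f x / L) = f x := by field_simp
      linarith
    have h4 := hc _ hy
    have h5 : (inner ℝ c (q + s • u - x) : ℝ) = -(‖c‖ * t) + s * ‖c‖ := by
      have heq : q + s • u - x = (s • u) - (x - q) := by abel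
      rw [heq, inner_sub_right, real_inner_smul_right, hcu, ht, hu,
        real_inner_smul_left, ← mul_assoc, mul_inv_cancel₀ (ne_of_gt hcn), one_mul]
      ring
    rw [h5] at h4
    nlinarith
  have hrt : r ≤ t := by
    by_contra h
    push_neg at h
    obtain ⟨s, hs1, hs2⟩ := exists_between (max_lt h hr0)
    exact absurd (key s (le_of_lt (lt_of_le_of_lt (le_max_right t 0) hs1)) hs2)
      (not_le.mpr (lt_of_le_of_lt (le_max_left t 0) hs1))
  have hfin : f x ≤ L * t ^ δ := by
    have h6 := Real.rpow_le_rpow (le_of_lt hr0) hrt (le_of_lt hδ)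
    rw [hrδ] at h6
    calc f x = L * (f x / L) := by field_simp
    _ ≤ L * t ^ δ := mul_le_mul_of_nonneg_left h6 (le_of_lt hL)
  rw [max_eq_left (le_of_lt hx)]
  exact hfin
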